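/- Let Φ : [0,1] → ℝ be integrable, γ > 0, and φ_{n+1} = ∫₀^1 t^{n+γ-1} Φ(t) dt for n ≥ 0. Then Δ^k{(n+γ)_{k-1} φ_{n+1}} = (-1)^k (n+γ)_{k-1} ∫₀^1 t^{n+γ-1} · ₂F₁(-k, k+n+γ-1; n+γ; t) · Φ(t) dt. -/

import Mathlib

open MeasureTheory intervalIntegral Finset

/-- Pochhammer symbol `(a)_m = a (a+1) ⋯ (a+m-1)` for real `a`. -/
noncomputable def poch (a : ℝ) (m : ℕ) : ℝ := ∏ i ∈ Finset.range m, (a + i)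

/-- Forward difference operator in `n`. -/
def fdiff (g : ℕ → ℝ) : ℕ → ℝ := fun n => g (n + 1) - g n

/-- The terminating Gauss hypergeometric polynomial
`₂F₁(-k, b; c; t) = ∑_{j=0}^k ((-k)_j (b)_j / (c)_j) t^j / j!`. -/
noncomputable def twoF1 (k : ℕ) (b c t : ℝ) : ℝ :=
  ∑ j ∈ Finset.range (k + 1),
    poch (-(k : ℝ)) j * poch b j / (poch c j * (Nat.factorial j)) * t ^ j

lemma poch_add (a : ℝ) (m l : ℕ) : poch a (m + l) = poch a m * poch (a + m) l := by
  rw [poch, poch, poch, Finset.prod_range_add]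
  congr 1
  refine Finset.prod_congr rfl fun i _ => ?_
  push_cast; ring

lemma poch_pos (a : ℝ) (ha : 0 < a) (m : ℕ) : 0 < poch a m :=
  Finset.prod_pos fun i _ => by positivity

lemma poch_neg_nat (k j : ℕ) (hj : j ≤ k) :
    poch (-(k : ℝ)) j = (-1 : ℝ) ^ j * (j.factorial : ℝ) * (k.choose j : ℝ) := by
  have h1 : poch (-(k : ℝ)) j = (-1 : ℝ) ^ j * ∏ i ∈ Finset.range j, ((k : ℝ) - i) := by
    rw [poch]
    calc ∏ i ∈ Finset.range j, (-(k : ℝ) + i)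
        = ∏ i ∈ Finset.range j, ((-1) * ((k : ℝ) - i)) :=
          Finset.prod_congr rfl fun i _ => by ring
      _ = (-1 : ℝ) ^ j * ∏ i ∈ Finset.range j, ((k : ℝ) - i) := by
          rw [Finset.prod_mul_distrib, Finset.prod_const, Finset.card_range]
  have h2 : ∏ i ∈ Finset.range j, ((k : ℝ) - i) = (k.descFactorial j : ℝ) := by
    rw [Nat.descFactorial_eq_prod_range, Nat.cast_prod]
    refine Finset.prod_congr rfl fun i hi => ?_
    rw [Nat.cast_sub (le_of_lt (lt_of_lt_of_le (Finset.mem_range.mp hi) hj))]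
  rw [h1, h2, Nat.descFactorial_eq_factorial_mul_choose]
  push_cast; ring

lemma key_coeff (a : ℝ) (ha : 0 < a) (K j k : ℕ) (hj : j ≤ k) :
    ((-1:ℝ)) ^ (k-j) * (k.choose j : ℝ) * poch (a + j) K
      = (-1:ℝ) ^ k * poch a K *
        (poch (-(k:ℝ)) j * poch (a + K) j / (poch a j * (j.factorial : ℝ))) := by
  have hpj : poch a j ≠ 0 := (poch_pos a ha j).ne'
  have hfac : (j.factorial : ℝ) ≠ 0 := Nat.cast_ne_zero.mpr j.factorial_ne_zero
  have hsw : poch a K * poch (a + K) j = poch a j * poch (a + j) K := by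
    rw [← poch_add, ← poch_add, Nat.add_comm]
  have hsq : ((-1:ℝ) ^ j) * ((-1:ℝ) ^ j) = 1 := by
    rw [← pow_add, ← two_mul, pow_mul]; norm_num
  have hsign : (-1:ℝ) ^ (k - j) = (-1:ℝ) ^ k * (-1:ℝ) ^ j := by
    rw [← Nat.sub_add_cancel hj, pow_add (-1:ℝ) (k-j) j, mul_assoc, hsq, mul_one,
      Nat.sub_add_cancel hj]
  rw [hsign, poch_neg_nat k j hj]
  field_simp
  linear_combination (-(k.choose j : ℝ)) * hsw

theorem fdiff_convergingFactor_integralRep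
    (Φ : ℝ → ℝ) (hΦ : IntervalIntegrable Φ volume 0 1)
    (γ : ℝ) (hγ : 0 < γ)
    (hint : ∀ n : ℕ, IntervalIntegrable (fun t : ℝ => t ^ ((n : ℝ) + γ - 1) * Φ t) volume 0 1)
    (φ : ℕ → ℝ)
    (hφ : ∀ n : ℕ, φ (n + 1) = ∫ t in (0:ℝ)..1, t ^ ((n : ℝ) + γ - 1) * Φ t)
    (k n : ℕ) (hk : 1 ≤ k) :
    (fdiff^[k] (fun m : ℕ => poch ((m : ℝ) + γ) (k - 1) * φ (m + 1))) n
      = (-1 : ℝ) ^ k * poch ((n : ℝ) + γ) (k - 1) *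
          ∫ t in (0:ℝ)..1,
            t ^ ((n : ℝ) + γ - 1) * twoF1 k ((k : ℝ) + n + γ - 1) ((n : ℝ) + γ) t * Φ t := by
  have ha : 0 < (n : ℝ) + γ := by positivity
  have hKr : ((k - 1 : ℕ) : ℝ) = (k : ℝ) - 1 := by
    rw [Nat.cast_sub hk]; norm_num
  set F : ℕ → ℝ → ℝ := fun j t =>
    ((-1:ℝ)^(k-j) * (k.choose j : ℝ) * poch (((n+j : ℕ) : ℝ) + γ) (k-1)) *
      (t ^ (((n+j : ℕ) : ℝ) + γ - 1) * Φ t) with hF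
  have hFint : ∀ j ∈ Finset.range (k+1), IntervalIntegrable (F j) volume 0 1 := by
    intro j _
    exact (hint (n+j)).const_mul _
  have step1 : (fdiff^[k] (fun m : ℕ => poch ((m : ℝ) + γ) (k-1) * φ (m + 1))) n
      = ∑ j ∈ Finset.range (k+1), ∫ t in (0:ℝ)..1, F j t := by
    rw [show fdiff = fwdDiff (1:ℕ) from rfl, fwdDiff_iter_eq_sum_shift]
    refine Finset.sum_congr rfl fun j hj => ?_
    simp only [smul_eq_mul, mul_one, zsmul_eq_mul, Int.cast_mul, Int.cast_pow,
      Int.cast_neg, Int.cast_one, Int.cast_natCast]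
    rw [hφ (n+j), ← mul_assoc, ← intervalIntegral.integral_const_mul]
  rw [step1, ← intervalIntegral.integral_finset_sum hFint,
    ← intervalIntegral.integral_const_mul]
  apply intervalIntegral.integral_congr_ae
  refine Filter.Eventually.of_forall fun t ht => ?_
  rw [Set.uIoc_of_le (by norm_num : (0:ℝ) ≤ 1)] at ht
  have ht0 : 0 < t := ht.1
  rw [twoF1]
  simp only [Finset.mul_sum, Finset.sum_mul]
  refine Finset.sum_congr rfl fun j hj => ?_
  have hj' : j ≤ k := Nat.lt_succ_iff.mp (Finset.mem_range.mp hj)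
  have hexp : t ^ (((n+j : ℕ) : ℝ) + γ - 1) = t ^ ((n:ℝ) + γ - 1) * t ^ j := by
    rw [show (((n+j : ℕ) : ℝ) + γ - 1) = ((n:ℝ) + γ - 1) + (j : ℝ) by push_cast; ring,
      Real.rpow_add ht0, Real.rpow_natCast]
  have haj : ((n+j : ℕ) : ℝ) + γ = (n : ℝ) + γ + (j : ℕ) := by push_cast; ring
  have hb : (k : ℝ) + n + γ - 1 = (n : ℝ) + γ + ((k-1 : ℕ) : ℝ) := by rw [hKr]; ring
  rw [hF]
  simp only []
  rw [hexp, haj, hb, key_coeff ((n:ℝ) + γ) ha (k-1) j k hj']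
  ring
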